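/- arXiv:2004.00350 — 2 statements merged into one kernel-verified Lean document; each statement's English description precedes it below -/
import Mathlib

section
/- Suppose V ≠ 0, the elements X_1, …, X_m span 𝔤 as a real vector space, the only complex subspaces W ⊆ V satisfying ρ(X)W ⊆ W for all X ∈ 𝔤 are W = 0 and W = V, and ρ is not identically zero. Then the self-adjoint operator −Σ_{i=1}^m ρ(X_i)² is positive definite; that is, ⟨−Σ_{i=1}^m ρ(X_i)² v, v⟩ > 0 for every nonzero v ∈ V. -/
open scoped ComplexOrder

/-- Let `𝔤` be a finite-dimensional real Lie algebra and `ρ : 𝔤 → End ℂ V` an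
ℝ-linear Lie algebra representation on a nonzero finite-dimensional complex inner
product space `V` by skew-adjoint operators. If `X_1, …, X_m` span `𝔤`, the
representation is irreducible (the only invariant complex subspaces are `0` and `V`),
and `ρ` is not identically zero, then `-∑ i, ρ(X_i)²` is positive definite:
`⟨-∑ i, ρ(X_i)² v, v⟩ > 0` for every nonzero `v`. -/
theorem statement10 {L : Type*} [LieRing L] [LieAlgebra ℝ L] [FiniteDimensional ℝ L]
    {V : Type*} [NormedAddCommGroup V] [InnerProductSpace ℂ V] [FiniteDimensional ℂ V]
    [Nontrivial V]
    (ρ : L →ₗ[ℝ] (V →ₗ[ℂ] V))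
    (hbracket : ∀ x y : L, ρ ⁅x, y⁆ = ρ x ∘ₗ ρ y - ρ y ∘ₗ ρ x)
    (hskew : ∀ (x : L) (v w : V), (inner ℂ (ρ x v) w : ℂ) = -inner ℂ v (ρ x w))
    {m : ℕ} (X : Fin m → L) (hspan : Submodule.span ℝ (Set.range X) = ⊤)
    (hirr : ∀ W : Submodule ℂ V, (∀ (x : L), ∀ v ∈ W, ρ x v ∈ W) → W = ⊥ ∨ W = ⊤)
    (hρ : ∃ x : L, ρ x ≠ 0) :
    ∀ v : V, v ≠ 0 → 0 < (inner ℂ ((-∑ i, ρ (X i) ∘ₗ ρ (X i)) v) v : ℂ) := by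
  intro v hv
  -- Step 1: there is some i with ρ (X i) v ≠ 0
  have hex : ∃ i, ρ (X i) v ≠ 0 := by
    by_contra hall
    push_neg at hall
    have hker : ∀ x : L, ρ x v = 0 := by
      intro x
      have hx : x ∈ Submodule.span ℝ (Set.range X) := hspan ▸ Submodule.mem_top
      induction hx using Submodule.span_induction with
      | mem y hy => obtain ⟨i, rfl⟩ := hy; exact hall i
      | zero => simp
      | add y z _ _ hy hz => rw [map_add]; simp [hy, hz]
      | smul c y _ hy => rw [map_smul]; simp [hy]
    set K : Submodule ℂ V := ⨅ x : L, LinearMap.ker (ρ x) with hK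
    have hinv : ∀ (x : L), ∀ w ∈ K, ρ x w ∈ K := by
      intro x w hw
      have hw0 : ρ x w = 0 := by
        have := Submodule.mem_iInf (fun x : L => LinearMap.ker (ρ x)) |>.mp hw x
        exact this
      rw [hw0]
      exact Submodule.zero_mem K
    have hvK : v ∈ K := Submodule.mem_iInf _ |>.mpr fun x => hker x
    rcases hirr K hinv with hbot | htop
    · rw [hbot] at hvK
      exact hv (Submodule.mem_bot ℂ |>.mp hvK)
    · obtain ⟨x, hx⟩ := hρ
      apply hx
      ext w
      have hw : w ∈ K := htop ▸ Submodule.mem_top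
      simpa using Submodule.mem_iInf (fun x : L => LinearMap.ker (ρ x)) |>.mp hw x
  -- Step 2: compute the inner product
  have hsum : (inner ℂ ((-∑ i, ρ (X i) ∘ₗ ρ (X i)) v) v : ℂ)
      = ((∑ i, ‖ρ (X i) v‖ ^ 2 : ℝ) : ℂ) := by
    rw [LinearMap.neg_apply, LinearMap.sum_apply, inner_neg_left, sum_inner,
      ← Finset.sum_neg_distrib]
    push_cast
    refine Finset.sum_congr rfl fun i _ => ?_
    rw [Function.comp_apply, hskew, neg_neg, inner_self_eq_norm_sq_to_K]
    norm_cast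
  rw [hsum]
  rw [Complex.zero_lt_real]
  obtain ⟨i, hi⟩ := hex
  refine Finset.sum_pos' (fun j _ => by positivity) ⟨i, Finset.mem_univ i, ?_⟩
  exact pow_pos (norm_pos_iff.mpr hi) 2
end

section
/- Let Y_1, …, Y_k ∈ 𝔤 be bracket generating, i.e. the smallest Lie subalgebra of 𝔤 containing {Y_1, …, Y_k} is 𝔤 itself. If v ∈ V satisfies Σ_{j=1}^k ρ(Y_j)² v = 0, then ρ(X) v = 0 for all X ∈ 𝔤. -/
/-- Let `ρ` be an ℝ-linear skew-adjoint Lie algebra representation of a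
finite-dimensional real Lie algebra `𝔤` on a finite-dimensional complex inner
product space `V`. If `Y_1, …, Y_k ∈ 𝔤` are bracket generating (the smallest Lie
subalgebra containing them is `𝔤`) and `v ∈ V` satisfies `∑ j, ρ(Y_j)² v = 0`,
then `ρ(X) v = 0` for all `X ∈ 𝔤`. -/
theorem statement12 {L : Type*} [LieRing L] [LieAlgebra ℝ L] [FiniteDimensional ℝ L]
    {V : Type*} [NormedAddCommGroup V] [InnerProductSpace ℂ V] [FiniteDimensional ℂ V]
    (ρ : L →ₗ[ℝ] (V →ₗ[ℂ] V))
    (hbracket : ∀ x y : L, ρ ⁅x, y⁆ = ρ x ∘ₗ ρ y - ρ y ∘ₗ ρ x)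
    (hskew : ∀ (x : L) (v w : V), (inner ℂ (ρ x v) w : ℂ) = -inner ℂ v (ρ x w))
    {k : ℕ} (Y : Fin k → L)
    (hgen : LieSubalgebra.lieSpan ℝ L (Set.range Y) = ⊤)
    (v : V) (hv : (∑ j, ρ (Y j) ∘ₗ ρ (Y j)) v = 0) :
    ∀ x : L, ρ x v = 0 := by
  -- Step 1: each ρ (Y j) v = 0
  have key : ∀ j, ρ (Y j) v = 0 := by
    have h0 : (inner ℂ ((∑ j, ρ (Y j) ∘ₗ ρ (Y j)) v) v : ℂ) = 0 := by rw [hv, inner_zero_left]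
    have h1 : (∑ j, (‖ρ (Y j) v‖ : ℂ)^2) = 0 := by
      rw [LinearMap.sum_apply, sum_inner] at h0
      have hneg : ∑ j, -((‖ρ (Y j) v‖ : ℂ)^2) = 0 := by
        rw [← h0]
        refine Finset.sum_congr rfl fun j _ => ?_
        rw [LinearMap.comp_apply, hskew, inner_self_eq_norm_sq_to_K]
        norm_cast
      rw [Finset.sum_neg_distrib, neg_eq_zero] at hneg
      exact hneg
    have h2 : (∑ j, ‖ρ (Y j) v‖^2) = 0 := by
      have := congrArg Complex.re h1
      simpa [← Complex.ofReal_pow] using this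
    intro j
    have := (Finset.sum_eq_zero_iff_of_nonneg (fun i _ => sq_nonneg ‖ρ (Y i) v‖)).mp h2 j
      (Finset.mem_univ j)
    have : ‖ρ (Y j) v‖ = 0 := by nlinarith [norm_nonneg (ρ (Y j) v)]
    simpa using this
  -- Step 2: the set of x with ρ x v = 0 is a Lie subalgebra
  let S : LieSubalgebra ℝ L :=
    { carrier := {x | ρ x v = 0}
      add_mem' := by intro a b ha hb; simp only [Set.mem_setOf_eq] at *; rw [map_add]; simp [ha, hb]
      zero_mem' := by simp
      smul_mem' := by intro c a ha; simp only [Set.mem_setOf_eq] at *; rw [map_smul]; simp [ha]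
      lie_mem' := by
        intro a b ha hb
        simp only [Set.mem_setOf_eq] at *
        rw [hbracket]
        simp [ha, hb] }
  have hle : LieSubalgebra.lieSpan ℝ L (Set.range Y) ≤ S := by
    apply LieSubalgebra.lieSpan_le.mpr
    rintro _ ⟨j, rfl⟩
    exact key j
  intro x
  have : x ∈ S := hle (hgen ▸ LieSubalgebra.mem_top x)
  exact this
end
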